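/- The class of all finite graphs has the extension property for partial automorphisms (EPPA): for every finite graph A there is a finite graph B containing A as an induced subgraph such that every isomorphism between two induced subgraphs of A extends to an automorphism of B. Moreover, one can take B to have |A|·2^{|A|-1} vertices. -/

import Mathlib

namespace Stmt5Aux

open Equiv

/-- Vertex set of the EPPA witness: pairs `(a, χ)` with `χ a = false`. -/
def V (n : ℕ) : Type := {p : Fin n × (Fin n → Bool) // p.2 p.1 = false}

instance (n : ℕ) : Fintype (V n) := by unfold V; infer_instance

/-- The witness graph: `(a,χ) ~ (b,ψ)` iff `a ≠ b` and `χ b ≠ ψ a`. -/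
def HV (n : ℕ) : SimpleGraph (V n) where
  Adj p q := p.1.1 ≠ q.1.1 ∧ p.1.2 q.1.1 ≠ q.1.2 p.1.1
  symm := ⟨fun p q h => ⟨h.1.symm, h.2.symm⟩⟩
  loopless := ⟨fun p h => h.1 rfl⟩

variable {n : ℕ}

open Classical in
/-- Canonical valuation attached to a vertex of `G`. -/
noncomputable def chi (G : SimpleGraph (Fin n)) (a : Fin n) : Fin n → Bool :=
  fun b => if a < b ∧ G.Adj a b then true else false

lemma chi_self (G : SimpleGraph (Fin n)) (a : Fin n) : chi G a a = false := by
  classical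
  simp [chi]

lemma chi_xor_true (G : SimpleGraph (Fin n)) {a b : Fin n} (hab : a ≠ b) :
    (xor (chi G a b) (chi G b a) = true) ↔ G.Adj a b := by
  classical
  rcases lt_or_gt_of_ne hab with h | h
  · have hba : ¬ b < a := asymm h
    by_cases hAdj : G.Adj a b <;> simp [chi, h, hba, hAdj]
  · have hba : ¬ a < b := asymm h
    by_cases hAdj : G.Adj a b <;>
      simp [chi, h, hba, hAdj, G.adj_comm b a]

lemma ne_iff_xor (x y : Bool) : x ≠ y ↔ xor x y = true := by
  cases x <;> cases y <;> decide

lemma bool_eq_of_iff {x y : Bool} (h : (x = true) ↔ (y = true)) : x = y := by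
  cases x <;> cases y <;> simp_all

lemma chi_ne_iff (G : SimpleGraph (Fin n)) {a b : Fin n} (hab : a ≠ b) :
    chi G a b ≠ chi G b a ↔ G.Adj a b := by
  rw [← chi_xor_true G hab]
  exact ne_iff_xor _ _

lemma chi_xor_eq (G : SimpleGraph (Fin n)) {a b a' b' : Fin n} (hab : a ≠ b)
    (hab' : a' ≠ b') (h : G.Adj a b ↔ G.Adj a' b') :
    xor (chi G a b) (chi G b a) = xor (chi G a' b') (chi G b' a') := by
  apply bool_eq_of_iff
  rw [chi_xor_true G hab, chi_xor_true G hab']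
  exact h

/-- The canonical embedding of `G` into `HV n`. -/
noncomputable def emb (G : SimpleGraph (Fin n)) : G ↪g HV n where
  toFun a := ⟨(a, chi G a), chi_self G a⟩
  inj' a b h := congrArg (fun p => p.1.1) h
  map_rel_iff' := by
    intro a b
    constructor
    · rintro ⟨h1, h2⟩
      exact (chi_ne_iff G h1).1 h2
    · intro h
      exact ⟨G.ne_of_adj h, (chi_ne_iff G (G.ne_of_adj h)).2 h⟩

lemma xor_ne_xor (x y e : Bool) : (xor x e ≠ xor y e) ↔ x ≠ y := by
  cases x <;> cases y <;> cases e <;> decide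

lemma xor_rearrange (x y u v : Bool) (h : xor x y = xor u v) : xor x u = xor y v := by
  revert h; cases x <;> cases y <;> cases u <;> cases v <;> decide

/-- Automorphisms of `HV n` from a permutation `σ` and a symmetric flip `ε`. -/
def auto (σ : Equiv.Perm (Fin n)) (ε : Fin n → Fin n → Bool)
    (hd : ∀ a, ε a a = false) (hs : ∀ a b, ε a b = ε b a) : HV n ≃g HV n where
  toFun p := ⟨(σ p.1.1, fun c => xor (p.1.2 (σ.symm c)) (ε p.1.1 (σ.symm c))), by
      simp [p.2, hd]⟩
  invFun p := ⟨(σ.symm p.1.1, fun c => xor (p.1.2 (σ c)) (ε (σ.symm p.1.1) c)), by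
      simp [p.2, hd]⟩
  left_inv p := by
    apply Subtype.ext
    apply Prod.ext
    · simp
    · funext c
      simp [Bool.xor_assoc]
  right_inv p := by
    apply Subtype.ext
    apply Prod.ext
    · simp
    · funext c
      simp [Bool.xor_assoc]
  map_rel_iff' := by
    intro p q
    show (σ p.1.1 ≠ σ q.1.1 ∧
        xor (p.1.2 (σ.symm (σ q.1.1))) (ε p.1.1 (σ.symm (σ q.1.1)))
          ≠ xor (q.1.2 (σ.symm (σ p.1.1))) (ε q.1.1 (σ.symm (σ p.1.1)))) ↔
      (p.1.1 ≠ q.1.1 ∧ p.1.2 q.1.1 ≠ q.1.2 p.1.1)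
    simp only [Equiv.symm_apply_apply]
    constructor
    · rintro ⟨h1, h2⟩
      refine ⟨fun h => h1 (congrArg σ h), ?_⟩
      rw [hs q.1.1 p.1.1] at h2
      exact (xor_ne_xor _ _ _).1 h2
    · rintro ⟨h1, h2⟩
      refine ⟨fun h => h1 (σ.injective h), ?_⟩
      rw [hs q.1.1 p.1.1]
      exact (xor_ne_xor _ _ _).2 h2

lemma card_V (n : ℕ) : Fintype.card (V n) = n * 2 ^ (n - 1) := by
  classical
  have e1 : V n ≃ Σ a : Fin n, {χ : Fin n → Bool // χ a = false} :=
    Equiv.subtypeProdEquivSigmaSubtype (fun (a : Fin n) (χ : Fin n → Bool) => χ a = false)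
  have h2 : ∀ a : Fin n, Fintype.card {χ : Fin n → Bool // χ a = false} = 2 ^ (n - 1) := by
    intro a
    have e2 : {χ : Fin n → Bool // χ a = false} ≃
        {χ : Fin n → Bool // χ ∘ (Subtype.val : {b : Fin n // b = a} → Fin n)
          = fun _ => false} := by
      refine Equiv.subtypeEquivRight fun χ => ⟨fun h => ?_, fun h => ?_⟩
      · funext b
        rcases b with ⟨b, hb⟩
        subst hb
        exact h
      · exact congrFun h ⟨a, rfl⟩
    have e3 := Equiv.subtypePreimage (fun b : Fin n => b = a)
      (fun _ : {b : Fin n // b = a} => false)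
    have hc : Fintype.card {b : Fin n // ¬ b = a} = n - 1 := by
      rw [Fintype.card_subtype_compl, Fintype.card_subtype_eq, Fintype.card_fin]
    calc Fintype.card {χ : Fin n → Bool // χ a = false}
        = Fintype.card ({b : Fin n // ¬ b = a} → Bool) :=
          Fintype.card_congr (e2.trans e3)
      _ = 2 ^ (n - 1) := by rw [Fintype.card_fun, Fintype.card_bool, hc]
  rw [Fintype.card_congr e1, Fintype.card_sigma]
  simp [h2, Finset.sum_const, Fintype.card_fin, mul_comm]

end Stmt5Aux

open Stmt5Aux in
/-- EPPA for finite graphs (Hrushovski's theorem), with a witness of size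
`|A| * 2^(|A|-1)`: for every finite graph `A` (on vertex set `Fin n`) there is a finite
graph `B` (on `Fin m` with `m = n * 2^(n-1)`) containing `A` as an induced subgraph such
that every isomorphism between two induced subgraphs of `A` extends to an automorphism
of `B`. -/
theorem stmt5 (n : ℕ) (G : SimpleGraph (Fin n)) :
    ∃ (m : ℕ) (H : SimpleGraph (Fin m)) (f : G ↪g H),
      m = n * 2 ^ (n - 1) ∧
      ∀ (s t : Set (Fin n)) (φ : G.induce s ≃g G.induce t),
        ∃ Φ : H ≃g H, ∀ (x : Fin n) (hx : x ∈ s), Φ (f x) = f (φ ⟨x, hx⟩).1 := by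
  classical
  set m := n * 2 ^ (n - 1) with hm
  have eFin : V n ≃ Fin m := Fintype.equivFinOfCardEq (card_V n)
  set H : SimpleGraph (Fin m) := (HV n).comap (eFin.symm : Fin m → V n) with hH
  have iso : HV n ≃g H := by
    refine ⟨eFin, ?_⟩
    intro a b
    simp [hH]
  refine ⟨m, H, iso.toEmbedding.comp (emb G), rfl, ?_⟩
  intro s t φ
  set σ : Equiv.Perm (Fin n) := Equiv.extendSubtype φ.toEquiv with hσdef
  have hσ : ∀ (x : Fin n) (hx : x ∈ s), σ x = (φ ⟨x, hx⟩).1 := by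
    intro x hx
    exact Equiv.extendSubtype_apply_of_mem φ.toEquiv x hx
  set ε : Fin n → Fin n → Bool := fun a b =>
    if a = b then false
    else if ha : a ∈ s then xor (chi G a b) (chi G ((φ ⟨a, ha⟩ : ↥t) : Fin n) (σ b))
    else if hb : b ∈ s then xor (chi G b a) (chi G ((φ ⟨b, hb⟩ : ↥t) : Fin n) (σ a))
    else false with hεdef
  have hd : ∀ a, ε a a = false := by
    intro a; simp [hεdef]
  -- adjacency transfer along φ
  have hadj : ∀ (a b : Fin n) (ha : a ∈ s) (hb : b ∈ s),
      G.Adj a b ↔ G.Adj ((φ ⟨a, ha⟩ : ↥t) : Fin n) ((φ ⟨b, hb⟩ : ↥t) : Fin n) := by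
    intro a b ha hb
    have := φ.map_rel_iff (a := ⟨a, ha⟩) (b := ⟨b, hb⟩)
    simpa [SimpleGraph.comap] using this.symm
  have hφne : ∀ (a b : Fin n) (ha : a ∈ s) (hb : b ∈ s), a ≠ b →
      ((φ ⟨a, ha⟩ : ↥t) : Fin n) ≠ ((φ ⟨b, hb⟩ : ↥t) : Fin n) := by
    intro a b ha hb hne h
    apply hne
    have : (φ ⟨a, ha⟩) = (φ ⟨b, hb⟩) := Subtype.ext h
    have := φ.toEquiv.injective this
    exact congrArg Subtype.val this
  have hs : ∀ a b, ε a b = ε b a := by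
    intro a b
    rcases eq_or_ne a b with h | hne
    · rw [h]
    · by_cases ha : a ∈ s <;> by_cases hb : b ∈ s
      · -- both in s
        simp only [hεdef, if_neg hne, if_neg hne.symm, dif_pos ha, dif_pos hb]
        rw [hσ a ha, hσ b hb]
        apply xor_rearrange
        exact chi_xor_eq G hne (hφne a b ha hb hne) (hadj a b ha hb)
      · simp only [hεdef, if_neg hne, if_neg hne.symm, dif_pos ha, dif_neg hb]
      · simp only [hεdef, if_neg hne, if_neg hne.symm, dif_neg ha, dif_pos hb]
      · simp only [hεdef, if_neg hne, if_neg hne.symm, dif_neg ha, dif_neg hb]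
  have key : ∀ (x : Fin n) (hx : x ∈ s),
      (auto σ ε hd hs) (emb G x) = emb G ((φ ⟨x, hx⟩ : ↥t) : Fin n) := by
    intro x hx
    apply Subtype.ext
    apply Prod.ext
    · exact hσ x hx
    · funext c
      show xor (chi G x (σ.symm c)) (ε x (σ.symm c))
          = chi G ((φ ⟨x, hx⟩ : ↥t) : Fin n) c
      obtain ⟨b, rfl⟩ : ∃ b, c = σ b := ⟨σ.symm c, (σ.apply_symm_apply c).symm⟩
      rw [Equiv.symm_apply_apply]
      rcases eq_or_ne x b with h | hne
      · subst h
        rw [chi_self, hd, hσ x hx, chi_self]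
        decide
      · have : ε x b = xor (chi G x b) (chi G ((φ ⟨x, hx⟩ : ↥t) : Fin n) (σ b)) := by
          simp only [hεdef, if_neg hne, dif_pos hx]
        rw [this, ← Bool.xor_assoc, Bool.xor_self, Bool.false_xor]
  refine ⟨(iso.symm.trans (auto σ ε hd hs)).trans iso, ?_⟩
  intro x hx
  show iso ((auto σ ε hd hs) (iso.symm (iso (emb G x)))) = iso (emb G _)
  rw [iso.symm_apply_apply, key x hx]
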